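/- Fix η > 0 and 0 < s < 2η/σ². Then the discriminant Γ = 4σ⁴[(−a+η)² − 1]s² + 4σ²[(−a+η)(a² − 1) + 2η]s + (a² − 1)² of the quadratic 2σ²x² + [a² + 2σ²s(−a+η) − 1]x + β₁ = 0 is strictly positive, the quadratic has two distinct real roots t₁ < 0 < t₂, and the sequence (β_ℓ) is nonincreasing with β_ℓ ≤ β₁ < 0 for all ℓ ≥ 1 and β_ℓ → t₁ as ℓ → ∞. -/

import Mathlib

open Filter

/-- The sequence `β_ℓ` from the paper: `β₁ = (σ²s² − 2ηs)/2` and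
`β_ℓ = ([a² + 2σ²s(−a+η)]·β_{ℓ−1} + β₁)/(1 − 2σ²β_{ℓ−1})` for `ℓ ≥ 2`. -/
noncomputable def betaSeq (a σ η s : ℝ) : ℕ → ℝ
  | 0 => 0
  | 1 => (σ ^ 2 * s ^ 2 - 2 * η * s) / 2
  | (ℓ + 2) =>
      ((a ^ 2 + 2 * σ ^ 2 * s * (-a + η)) * betaSeq a σ η s (ℓ + 1)
            + (σ ^ 2 * s ^ 2 - 2 * η * s) / 2)
        / (1 - 2 * σ ^ 2 * betaSeq a σ η s (ℓ + 1))

/-- The discriminant `Γ` of the quadratic `2σ²x² + [a² + 2σ²s(−a+η) − 1]x + β₁ = 0`. -/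
noncomputable def Gam (a σ η s : ℝ) : ℝ :=
  4 * σ ^ 4 * ((-a + η) ^ 2 - 1) * s ^ 2
    + 4 * σ ^ 2 * ((-a + η) * (a ^ 2 - 1) + 2 * η) * s + (a ^ 2 - 1) ^ 2

set_option maxHeartbeats 1000000 in
theorem statement10 (a σ η s : ℝ) (ha : 1 < a) (hσ : 0 < σ) (hη : 0 < η)
    (hs0 : 0 < s) (hs1 : s < 2 * η / σ ^ 2) :
    -- the discriminant is strictly positive
    0 < Gam a σ η s ∧
    -- the quadratic has two distinct real roots t₁ < 0 < t₂
    (∃ t₁ t₂ : ℝ,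
      t₁ < 0 ∧ 0 < t₂ ∧ t₁ < t₂ ∧
      (2 * σ ^ 2 * t₁ ^ 2 + (a ^ 2 + 2 * σ ^ 2 * s * (-a + η) - 1) * t₁
          + betaSeq a σ η s 1 = 0) ∧
      (2 * σ ^ 2 * t₂ ^ 2 + (a ^ 2 + 2 * σ ^ 2 * s * (-a + η) - 1) * t₂
          + betaSeq a σ η s 1 = 0) ∧
      -- (β_ℓ) is nonincreasing with β_ℓ ≤ β₁ < 0 for all ℓ ≥ 1, and β_ℓ → t₁
      (∀ ℓ : ℕ, 1 ≤ ℓ → betaSeq a σ η s (ℓ + 1) ≤ betaSeq a σ η s ℓ) ∧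
      (∀ ℓ : ℕ, 1 ≤ ℓ → betaSeq a σ η s ℓ ≤ betaSeq a σ η s 1) ∧
      betaSeq a σ η s 1 < 0 ∧
      Tendsto (fun ℓ : ℕ => betaSeq a σ η s ℓ) atTop (nhds t₁)) := by
  have hσ2 : (0:ℝ) < σ ^ 2 := by positivity
  obtain ⟨β, hβdef⟩ : ∃ β : ℝ, β = (σ ^ 2 * s ^ 2 - 2 * η * s) / 2 := ⟨_, rfl⟩
  obtain ⟨A, hAdef⟩ : ∃ A : ℝ, A = a ^ 2 + 2 * σ ^ 2 * s * (-a + η) := ⟨_, rfl⟩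
  have hb1 : betaSeq a σ η s 1 = β := by rw [hβdef]; rfl
  have hsucc : ∀ n : ℕ, betaSeq a σ η s (n + 2)
      = (A * betaSeq a σ η s (n + 1) + β) / (1 - 2 * σ ^ 2 * betaSeq a σ η s (n + 1)) := by
    intro n; rw [hAdef, hβdef]; rfl
  have hsση : σ ^ 2 * s < 2 * η := by
    have := (lt_div_iff₀ hσ2).mp hs1
    nlinarith
  have hβneg : β < 0 := by
    rw [hβdef]
    nlinarith [mul_pos hs0 (sub_pos.mpr hsση)]
  have hA2 : A + 2 * σ ^ 2 * β = (a - σ ^ 2 * s) ^ 2 := by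
    rw [hβdef, hAdef]; ring
  have h2σβ : 2 * σ ^ 2 * β < 0 := by
    have := mul_neg_of_pos_of_neg hσ2 hβneg; linarith
  have hApos : 0 < A := by linarith [sq_nonneg (a - σ ^ 2 * s)]
  have hGam : Gam a σ η s = (A - 1) ^ 2 - 8 * σ ^ 2 * β := by
    rw [hβdef, hAdef]; unfold Gam; ring
  have hΓpos : 0 < Gam a σ η s := by rw [hGam]; linarith [sq_nonneg (A - 1)]
  obtain ⟨r, hrdef⟩ : ∃ r : ℝ, r = Real.sqrt (Gam a σ η s) := ⟨_, rfl⟩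
  have hr0 : 0 ≤ r := hrdef ▸ Real.sqrt_nonneg _
  have hr2 : r ^ 2 = (A - 1) ^ 2 - 8 * σ ^ 2 * β := by
    rw [hrdef, Real.sq_sqrt hΓpos.le, hGam]
  have hB2r : (A - 1) ^ 2 < r ^ 2 := by rw [hr2]; linarith
  have habs : |A - 1| < r :=
    lt_of_pow_lt_pow_left₀ 2 hr0 (by rw [sq_abs]; exact hB2r)
  have hBr1 : -r < A - 1 := (abs_lt.mp habs).1
  have hBr2 : A - 1 < r := (abs_lt.mp habs).2
  obtain ⟨t₁, ht1def⟩ : ∃ t : ℝ, t = (-(A - 1) - r) / (4 * σ ^ 2) := ⟨_, rfl⟩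
  obtain ⟨t₂, ht2def⟩ : ∃ t : ℝ, t = (-(A - 1) + r) / (4 * σ ^ 2) := ⟨_, rfl⟩
  have ht1neg : t₁ < 0 := ht1def ▸ div_neg_of_neg_of_pos (by linarith) (by positivity)
  have ht2pos : 0 < t₂ := ht2def ▸ div_pos (by linarith) (by positivity)
  have ht12 : t₁ < t₂ := ht1neg.trans ht2pos
  have hfac : ∀ x : ℝ, 2 * σ ^ 2 * x ^ 2 + (A - 1) * x + β
      = 2 * σ ^ 2 * (x - t₁) * (x - t₂) := by
    intro x
    have key : 2 * σ ^ 2 * (x - t₁) * (x - t₂)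
        = 2 * σ ^ 2 * x ^ 2 + (A - 1) * x
            + ((A - 1) ^ 2 - r ^ 2) / (8 * σ ^ 2) := by
      rw [ht1def, ht2def]; field_simp; ring
    rw [key, hr2]
    field_simp
    ring
  have hroot1 : 2 * σ ^ 2 * t₁ ^ 2 + (A - 1) * t₁ + β = 0 := by
    rw [hfac t₁]; ring
  have hroot2 : 2 * σ ^ 2 * t₂ ^ 2 + (A - 1) * t₂ + β = 0 := by
    rw [hfac t₂]; ring
  have ht1β : t₁ ≤ β := by
    have hqβ : 2 * σ ^ 2 * (β - t₁) * (β - t₂) ≤ 0 := by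
      rw [← hfac]
      have hq : 2 * σ ^ 2 * β ^ 2 + (A - 1) * β + β = β * (a - σ ^ 2 * s) ^ 2 := by
        rw [← hA2]; ring
      rw [hq]
      exact mul_nonpos_of_nonpos_of_nonneg hβneg.le (sq_nonneg _)
    by_contra h
    push_neg at h
    have h1 : 0 < t₁ - β := by linarith
    have h2 : 0 < t₂ - β := by linarith
    have heq : 2 * σ ^ 2 * (β - t₁) * (β - t₂)
        = 2 * (σ ^ 2 * ((t₁ - β) * (t₂ - β))) := by ring
    rw [heq] at hqβ
    linarith [mul_pos hσ2 (mul_pos h1 h2)]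
  have hrA1 : r ≤ A + 1 := by
    have hsq : (A + 1) ^ 2 - r ^ 2 = 4 * (a - σ ^ 2 * s) ^ 2 := by
      linear_combination -hr2 + 4 * hA2
    refine le_of_pow_le_pow_left₀ two_ne_zero (by linarith) ?_
    linarith [sq_nonneg (a - σ ^ 2 * s)]
  have hA2t1 : 0 ≤ A + 2 * σ ^ 2 * t₁ := by
    have h : 2 * σ ^ 2 * t₁ = (-(A - 1) - r) / 2 := by
      rw [ht1def]; field_simp; ring
    rw [h]; linarith [hrA1]
  -- the iteration step
  have hstep : ∀ x : ℝ, t₁ ≤ x → x ≤ β →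
      t₁ ≤ (A * x + β) / (1 - 2 * σ ^ 2 * x)
        ∧ (A * x + β) / (1 - 2 * σ ^ 2 * x) ≤ x := by
    intro x hx1 hx2
    have hxneg : x < 0 := lt_of_le_of_lt hx2 hβneg
    have hD : 0 < 1 - 2 * σ ^ 2 * x := by
      have := mul_neg_of_pos_of_neg hσ2 hxneg; linarith
    constructor
    · rw [le_div_iff₀ hD]
      have key : A * x + β - t₁ * (1 - 2 * σ ^ 2 * x)
          = (A + 2 * σ ^ 2 * t₁) * (x - t₁) := by
        linear_combination hroot1
      have := mul_nonneg hA2t1 (sub_nonneg.mpr hx1)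
      linarith
    · rw [div_le_iff₀ hD]
      have hq : 2 * σ ^ 2 * (x - t₁) * (x - t₂) ≤ 0 :=
        mul_nonpos_of_nonneg_of_nonpos
          (mul_nonneg (by positivity) (sub_nonneg.mpr hx1)) (by linarith)
      have key : A * x + β - x * (1 - 2 * σ ^ 2 * x)
          = 2 * σ ^ 2 * (x - t₁) * (x - t₂) := by
        linear_combination hfac x
      linarith
  -- invariant
  have hinv : ∀ n : ℕ, t₁ ≤ betaSeq a σ η s (n + 1) ∧ betaSeq a σ η s (n + 1) ≤ β := by
    intro n
    induction n with
    | zero => rw [hb1]; exact ⟨ht1β, le_refl _⟩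
    | succ n ih =>
        rw [hsucc n]
        exact ⟨(hstep _ ih.1 ih.2).1, (hstep _ ih.1 ih.2).2.trans ih.2⟩
  have hmono : ∀ ℓ : ℕ, 1 ≤ ℓ → betaSeq a σ η s (ℓ + 1) ≤ betaSeq a σ η s ℓ := by
    intro ℓ hℓ
    obtain ⟨n, rfl⟩ : ∃ n, ℓ = n + 1 := ⟨ℓ - 1, (Nat.succ_pred_eq_of_pos hℓ).symm⟩
    rw [hsucc n]
    exact (hstep _ (hinv n).1 (hinv n).2).2
  have hle : ∀ ℓ : ℕ, 1 ≤ ℓ → betaSeq a σ η s ℓ ≤ betaSeq a σ η s 1 := by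
    intro ℓ hℓ
    obtain ⟨n, rfl⟩ : ∃ n, ℓ = n + 1 := ⟨ℓ - 1, (Nat.succ_pred_eq_of_pos hℓ).symm⟩
    rw [hb1]
    exact (hinv n).2
  -- convergence
  have hant : Antitone (fun n : ℕ => betaSeq a σ η s (n + 1)) := by
    apply antitone_nat_of_succ_le
    intro n
    exact hmono (n + 1) (by omega)
  have hbdd : BddBelow (Set.range (fun n : ℕ => betaSeq a σ η s (n + 1))) := by
    refine ⟨t₁, ?_⟩
    rintro x ⟨n, rfl⟩
    exact (hinv n).1
  obtain ⟨L, hLdef⟩ : ∃ L : ℝ, L = ⨅ n : ℕ, betaSeq a σ η s (n + 1) := ⟨_, rfl⟩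
  have htc : Tendsto (fun n : ℕ => betaSeq a σ η s (n + 1)) atTop (nhds L) := by
    rw [hLdef]
    exact tendsto_atTop_ciInf hant hbdd
  have hLt1 : t₁ ≤ L := by
    rw [hLdef]
    exact le_ciInf fun n => (hinv n).1
  have hLβ : L ≤ β := by
    rw [hLdef]
    exact (ciInf_le hbdd 0).trans (le_of_eq hb1)
  have hLneg : L < 0 := lt_of_le_of_lt hLβ hβneg
  have hDL : (1 - 2 * σ ^ 2 * L) ≠ 0 := by
    have := mul_neg_of_pos_of_neg hσ2 hLneg
    intro h; linarith [h.ge]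
  have h1 : Tendsto (fun n : ℕ => A * betaSeq a σ η s (n + 1) + β) atTop
      (nhds (A * L + β)) := (htc.const_mul A).add_const β
  have h2 : Tendsto (fun n : ℕ => 1 - 2 * σ ^ 2 * betaSeq a σ η s (n + 1)) atTop
      (nhds (1 - 2 * σ ^ 2 * L)) := tendsto_const_nhds.sub (htc.const_mul _)
  have h3 : Tendsto (fun n : ℕ => (A * betaSeq a σ η s (n + 1) + β)
        / (1 - 2 * σ ^ 2 * betaSeq a σ η s (n + 1))) atTop
      (nhds ((A * L + β) / (1 - 2 * σ ^ 2 * L))) := h1.div h2 hDL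
  have h4 : (fun n : ℕ => (A * betaSeq a σ η s (n + 1) + β)
        / (1 - 2 * σ ^ 2 * betaSeq a σ η s (n + 1)))
      = fun n : ℕ => betaSeq a σ η s (n + 1 + 1) := by
    funext n
    exact (hsucc n).symm
  rw [h4] at h3
  have h5 : Tendsto (fun n : ℕ => betaSeq a σ η s (n + 1 + 1)) atTop (nhds L) :=
    htc.comp (tendsto_add_atTop_nat 1)
  have hfix : (A * L + β) / (1 - 2 * σ ^ 2 * L) = L := tendsto_nhds_unique h3 h5
  have hqL : 2 * σ ^ 2 * L ^ 2 + (A - 1) * L + β = 0 := by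
    rw [div_eq_iff hDL] at hfix
    linear_combination hfix
  have hLt1' : L = t₁ := by
    have hz : 2 * σ ^ 2 * (L - t₁) * (L - t₂) = 0 := by rw [← hfac]; exact hqL
    rcases mul_eq_zero.mp hz with h | h
    · rcases mul_eq_zero.mp h with h' | h'
      · exact absurd h' (by positivity)
      · linarith [sub_eq_zero.mp h']
    · exfalso
      have : L ≠ t₂ := by linarith
      exact this (sub_eq_zero.mp h)
  have hbtend : Tendsto (fun ℓ : ℕ => betaSeq a σ η s ℓ) atTop (nhds t₁) := by
    rw [← hLt1']
    exact (tendsto_add_atTop_iff_nat 1).mp htc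
  refine ⟨hΓpos, t₁, t₂, ht1neg, ht2pos, ht12, ?_, ?_, hmono, hle, hb1 ▸ hβneg, hbtend⟩
  · rw [hb1, ← hAdef]; exact hroot1
  · rw [hb1, ← hAdef]; exact hroot2
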